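/- Let D be a digraph with arc-weighting w, and let u ≠ v be vertices such that for every vertex x, if x → u is an arc with w(xu) > 0 then x → v is an arc of D. Let D' with arc-weighting w' be the contraction of u to v. Then for every vertex y ∈ V ∖ {u}, the second neighborhood weight does not increase: β^{D'}_y ≤ β^D_y. -/
import Mathlib


open Finset

/-- The first out-neighborhood of `v`: all `u` with `v → u`. -/
def firstNbhd {V : Type*} [Fintype V] (adj : V → V → Prop) [DecidableRel adj] (v : V) :
    Finset V :=
  Finset.univ.filter (fun u => adj v u)

/-- The second out-neighborhood of `v`: all `u ≠ v` with `¬ v → u` and `v → x → u` for some `x`. -/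
def secondNbhd {V : Type*} [Fintype V] [DecidableEq V] (adj : V → V → Prop)
    [DecidableRel adj] (v : V) : Finset V :=
  Finset.univ.filter (fun u => u ≠ v ∧ ¬ adj v u ∧ ∃ x, adj v x ∧ adj x u)

/-- First neighborhood weight `α_v = Σ_{u ∈ N1+(v)} w(vu)`. -/
def alphaW {V : Type*} [Fintype V] (adj : V → V → Prop) [DecidableRel adj]
    (w : V → V → ℝ) (v : V) : ℝ :=
  ∑ u ∈ firstNbhd adj v, w v u

/-- `β_v(s) = max({0} ∪ {w(us) − w(vs) : v → u and u → s})`. -/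
noncomputable def betaS {V : Type*} [Fintype V] (adj : V → V → Prop) [DecidableRel adj]
    (w : V → V → ℝ) (v s : V) : ℝ :=
  (insert (0 : ℝ)
    ((Finset.univ.filter (fun u => adj v u ∧ adj u s)).image (fun u => w u s - w v s))).max'
    (Finset.insert_nonempty _ _)

/-- Second neighborhood weight `β_v = Σ_{s ∈ V} β_v(s)`. -/
noncomputable def betaW {V : Type*} [Fintype V] (adj : V → V → Prop) [DecidableRel adj]
    (w : V → V → ℝ) (v : V) : ℝ :=
  ∑ s, betaS adj w v s

/-- Neighborhood weight difference `δ_v = β_v − α_v`. -/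
noncomputable def deltaW {V : Type*} [Fintype V] (adj : V → V → Prop) [DecidableRel adj]
    (w : V → V → ℝ) (v : V) : ℝ :=
  betaW adj w v - alphaW adj w v

private lemma betaS_nonneg' {V : Type*} [Fintype V] (adj : V → V → Prop) [DecidableRel adj]
    (w : V → V → ℝ) (v s : V) : 0 ≤ betaS adj w v s :=
  Finset.le_max' _ _ (Finset.mem_insert_self _ _)

private lemma le_betaS' {V : Type*} [Fintype V] (adj : V → V → Prop) [DecidableRel adj]
    (w : V → V → ℝ) {v s a : V} (h1 : adj v a) (h2 : adj a s) :
    w a s - w v s ≤ betaS adj w v s := by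
  unfold betaS
  apply Finset.le_max'
  apply Finset.mem_insert_of_mem
  refine Finset.mem_image_of_mem _ ?_
  simp [h1, h2]

/-- **Contraction does not increase second neighborhood weights.**
Let `u ≠ v` be vertices of an arc-weighted digraph such that every positive-weight arc
into `u` comes from an in-neighbor of `v`.  The contraction of `u` to `v` is the digraph
induced on `V ∖ {u}` whose weighting adds the weight of each arc `x → u` to `x → v`.
Then every remaining vertex `y` satisfies `β^{D'}_y ≤ β^D_y`. -/
theorem contraction_beta_le
    {V : Type*} [Fintype V] [DecidableEq V]
    (adj : V → V → Prop) [DecidableRel adj]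
    (hirr : ∀ a, ¬ adj a a)
    (hasym : ∀ a b, adj a b → ¬ adj b a)
    (w : V → V → ℝ)
    (hw_nonneg : ∀ a b, 0 ≤ w a b)
    (hw_arc : ∀ a b, ¬ adj a b → w a b = 0)
    (u v : V) (huv : u ≠ v)
    (hcontr : ∀ x, adj x u → 0 < w x u → adj x v) :
    ∀ y : {x : V // x ≠ u},
      betaW (fun a b : {x : V // x ≠ u} => adj a.1 b.1)
        (fun a b : {x : V // x ≠ u} =>
          if b.1 = v then w a.1 v + w a.1 u else w a.1 b.1) y
      ≤ betaW adj w y.1 := by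
  intro y
  have hb0 := betaS_nonneg' adj w y.1
  set w' : {x : V // x ≠ u} → {x : V // x ≠ u} → ℝ := fun a b =>
    if b.1 = v then w a.1 v + w a.1 u else w a.1 b.1 with hw'
  have key : ∀ s : {x : V // x ≠ u},
      betaS (fun a b : {x : V // x ≠ u} => adj a.1 b.1) w' y s
        ≤ betaS adj w y.1 s.1 + (if s.1 = v then betaS adj w y.1 u else 0) := by
    intro s
    apply Finset.max'_le
    intro x hx
    rcases Finset.mem_insert.mp hx with rfl | hx
    · have := hb0 s.1; have := hb0 u
      split_ifs <;> linarith
    · rcases Finset.mem_image.mp hx with ⟨a, ha, rfl⟩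
      simp only [Finset.mem_filter, Finset.mem_univ, true_and] at ha
      obtain ⟨hya, has⟩ := ha
      by_cases hsv : s.1 = v
      · have h1 : w a.1 v - w y.1 v ≤ betaS adj w y.1 v :=
          le_betaS' adj w hya (hsv ▸ has)
        have h2 : w a.1 u - w y.1 u ≤ betaS adj w y.1 u := by
          by_cases hau : adj a.1 u
          · exact le_betaS' adj w hya hau
          · have h3 := hw_arc a.1 u hau
            have h4 := hw_nonneg y.1 u
            have h5 := hb0 u
            linarith
        simp only [hw', hsv, if_true]
        linarith
      · have h1 : w a.1 s.1 - w y.1 s.1 ≤ betaS adj w y.1 s.1 :=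
          le_betaS' adj w hya has
        simp only [hw', hsv, if_false]
        linarith
  have hsum : betaW (fun a b : {x : V // x ≠ u} => adj a.1 b.1) w' y
      ≤ ∑ s : {x : V // x ≠ u},
          (betaS adj w y.1 s.1 + (if s.1 = v then betaS adj w y.1 u else 0)) :=
    Finset.sum_le_sum (fun s _ => key s)
  rw [Finset.sum_add_distrib] at hsum
  have h1 : ∑ s : {x : V // x ≠ u}, betaS adj w y.1 s.1
      = ∑ s ∈ Finset.univ.erase u, betaS adj w y.1 s := by
    rw [Finset.sum_subtype (p := fun x => x ≠ u) (Finset.univ.erase u) (by simp) (betaS adj w y.1)]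
  have h2 : ∑ s : {x : V // x ≠ u}, (if s.1 = v then betaS adj w y.1 u else 0)
      = betaS adj w y.1 u := by
    have : ∀ s : {x : V // x ≠ u},
        (if s.1 = v then betaS adj w y.1 u else 0)
          = (if s = ⟨v, Ne.symm huv⟩ then betaS adj w y.1 u else 0) := by
      intro s; simp [Subtype.ext_iff]
    rw [Finset.sum_congr rfl (fun s _ => this s), Finset.sum_ite_eq' Finset.univ]
    simp
  have h3 : betaW adj w y.1
      = betaS adj w y.1 u + ∑ s ∈ Finset.univ.erase u, betaS adj w y.1 s := by
    rw [betaW, ← Finset.add_sum_erase Finset.univ _ (Finset.mem_univ u)]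
  rw [h1, h2] at hsum
  rw [h3]
  linarith
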